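/- Let n ≥ 2 and let B be a set of regular languages over Σ_n. If there exists ℓ ∈ ℕ such that every L ∈ B is contained in a finite union of members of R_{≤ℓ}, then B is not a D_n-basic-separator set. -/

import Mathlib

set_option linter.unusedVariables false

/-! ### Alphabet, effects, Dyck languages -/

abbrev Sig (n : ℕ) := Fin n × Bool

def letterEff {n : ℕ} (a : Sig n) : Fin n → ℤ :=
  fun j => if j = a.1 then (if a.2 then 1 else -1) else 0

def wordEff {n : ℕ} (w : List (Sig n)) : Fin n → ℤ :=
  (w.map letterEff).sum

/-- The Dyck language `D_n`. -/
def Dyck (n : ℕ) : Language (Sig n) :=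
  {w | wordEff w = 0 ∧ ∀ u, u <+: w → ∀ j, 0 ≤ wordEff u j}

/-- The coverability Dyck language `D_n^↑`. -/
def CovDyck (n : ℕ) : Language (Sig n) :=
  {w | ∀ u, u <+: w → ∀ j, 0 ≤ wordEff u j}

/-- The `ℤ`-Dyck language `D_n^ℤ`. -/
def ZDyck (n : ℕ) : Language (Sig n) :=
  {w | wordEff w = 0}

/-! ### VASS -/

structure VASS (A : Type) where
  Q : Type
  C : Type
  finQ : Finite Q
  finC : Finite C
  E : Set (Q × Option A × (C → ℤ) × Q)
  finE : E.Finite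

inductive VASS.NRun {A : Type} (V : VASS A) :
    (V.Q × (V.C → ℕ)) → List A → (V.Q × (V.C → ℕ)) → Prop
  | refl (cfg : V.Q × (V.C → ℕ)) : VASS.NRun V cfg [] cfg
  | step {q : V.Q} {c : V.C → ℕ} {a : Option A} {d : V.C → ℤ} {q' : V.Q}
      {c' : V.C → ℕ} {w : List A} {last : V.Q × (V.C → ℕ)} :
      (q, a, d, q') ∈ V.E →
      (∀ j, (c' j : ℤ) = (c j : ℤ) + d j) →
      VASS.NRun V (q', c') w last →
      VASS.NRun V (q, c) (a.toList ++ w) last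

/-- An initialized VASS: generalized initial/final configurations,
with `none` playing the role of `ω`. -/
structure InitVASS (A : Type) extends VASS A where
  qin : Q
  qout : Q
  cin : C → Option ℕ
  cout : C → Option ℕ

/-- The reachability language of an initialized VASS. -/
def InitVASS.lang {A : Type} (V : InitVASS A) : Language A :=
  {w | ∃ c0 cl : V.C → ℕ,
      V.toVASS.NRun (V.qin, c0) w (V.qout, cl) ∧
      (∀ j m, V.cin j = some m → c0 j = m) ∧
      (∀ j m, V.cout j = some m → cl j = m)}

/-! ### Transducers -/

structure Transducer (G A : Type) where
  Q : Type
  finQ : Finite Q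
  start : Q
  accept : Set Q
  trans : Set (Q × (Option G × Option A) × Q)
  finT : trans.Finite

inductive Transducer.Path {G A : Type} (T : Transducer G A) :
    T.Q → List G → List A → T.Q → Prop
  | refl (q : T.Q) : Transducer.Path T q [] [] q
  | step {q q' qf : T.Q} {g : Option G} {a : Option A} {u : List G} {v : List A} :
      (q, (g, a), q') ∈ T.trans →
      Transducer.Path T q' u v qf →
      Transducer.Path T q (g.toList ++ u) (a.toList ++ v) qf

/-- The relation recognized by a transducer. -/
def Transducer.rel {G A : Type} (T : Transducer G A) (u : List G) (v : List A) : Prop :=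
  ∃ qf ∈ T.accept, T.Path T.start u v qf

/-- `T⁻¹(L)`. -/
def Transducer.invImage {G A : Type} (T : Transducer G A) (L : Language A) : Language G :=
  {u | ∃ v ∈ L, T.rel u v}

/-! ### Regular separability -/

def RegSep {A : Type} (L1 L2 : Language A) : Prop :=
  ∃ R : Language A, R.IsRegular ∧ L1 ≤ R ∧ ∀ w ∈ R, w ∉ L2

/-! ### Linear sets and regular approximations -/

structure LinSet (n : ℕ) where
  base : Fin n → ℤ
  periods : Set (Fin n → ℤ)
  finP : periods.Finite

def LinSet.toSet {n : ℕ} (L : LinSet n) : Set (Fin n → ℤ) :=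
  {x | ∃ p ∈ AddSubmonoid.closure L.periods, x = L.base + p}

def inBox {n : ℕ} (k : ℕ) (x : Fin n → ℤ) : Prop :=
  ∀ j, -(k : ℤ) ≤ x j ∧ x j ≤ (k : ℤ)

/-- Reachability in the ε-NFA underlying the `k`-th regular approximation of `L`:
states are vectors in `[-k,k]^n`, letters move by their effect, ε-transitions
subtract a period. -/
inductive KReach {n : ℕ} (L : LinSet n) (k : ℕ) :
    (Fin n → ℤ) → List (Sig n) → (Fin n → ℤ) → Prop
  | refl (x : Fin n → ℤ) (h : inBox k x) : KReach L k x [] x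
  | letter {x y : Fin n → ℤ} {w : List (Sig n)} (a : Sig n)
      (h : inBox k x) (h' : inBox k (x + letterEff a)) :
      KReach L k (x + letterEff a) w y → KReach L k x (a :: w) y
  | eps {x y : Fin n → ℤ} {w : List (Sig n)} {p : Fin n → ℤ}
      (hp : p ∈ L.periods) (h : inBox k x) (h' : inBox k (x - p)) :
      KReach L k (x - p) w y → KReach L k x w y

/-- The `k`-th regular approximation `K^k(L)`. -/
def KApprox {n : ℕ} (L : LinSet n) (k : ℕ) : Language (Sig n) :=
  {w | ∃ y, KReach L k 0 w y ∧ y ∈ L.toSet}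

/-! ### The `⊕⁺` operation and the families `R_ℓ` -/

def posPlus {n : ℕ} (K L : Set (Fin n → ℤ)) : Set (Fin n → ℤ) :=
  {x | (∀ j, 0 ≤ x j) ∧ ∃ a ∈ K, (∀ j, 0 ≤ a j) ∧ ∃ b ∈ L, x = a + b}

def posFoldAux {n : ℕ} : Set (Fin n → ℤ) → List (Set (Fin n → ℤ)) → Set (Fin n → ℤ)
  | S, [] => S
  | S, L :: Ls => posFoldAux (posPlus S L) Ls

/-- `posFold [L₁, …, L_ℓ] = L₁ ⊕⁺ ⋯ ⊕⁺ L_ℓ` (associated to the left); for `ℓ = 1`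
it is `L₁` itself. -/
def posFold {n : ℕ} : List (Set (Fin n → ℤ)) → Set (Fin n → ℤ)
  | [] => ∅
  | L :: Ls => posFoldAux L Ls

/-- The family `R_ℓ`. -/
def RFam (n ℓ : ℕ) : Set (Language (Sig n)) :=
  {K | ∃ (k : ℕ) (Ls : List (LinSet n)), Ls.length = ℓ ∧
      (0 : Fin n → ℤ) ∉ posFold (Ls.map LinSet.toSet) ∧
      K = (Ls.map (fun L => KApprox L k)).prod}

/-- `R_{≤ m} = ⋃_{1 ≤ i ≤ m} R_i`. -/
def RleFam (n m : ℕ) : Set (Language (Sig n)) :=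
  ⋃ i ∈ Set.Icc 1 m, RFam n i

/-- `R = ⋃_{ℓ ≥ 1} R_ℓ`. -/
def RAll (n : ℕ) : Set (Language (Sig n)) :=
  ⋃ i ∈ Set.Ici 1, RFam n i

/-! ### Basic separator sets -/

def IsBasicSepSet {n : ℕ} (S : Language (Sig n)) (B : Set (Language (Sig n))) : Prop :=
  (∀ K ∈ B, K.IsRegular ∧ ∀ w ∈ K, w ∉ S) ∧
  (∀ L : Language (Sig n), L.IsRegular → (∀ w ∈ L, w ∉ S) →
    ∃ F ⊆ B, F.Finite ∧ ∀ w ∈ L, ∃ K ∈ F, w ∈ K)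

/-! Extra defs for specific statements -/

/-- `u ∼_A v`: the words induce the same state transformation in the DFA `M`. -/
def simEq {α σ : Type} (M : DFA α σ) (u v : List α) : Prop :=
  ∀ p : σ, M.evalFrom p u = M.evalFrom p v

/-- Assemble `w₀ m₁ w₁ ⋯ m_k w_k` over `Σ ⊎ Σ#` (`Sum.inl` = plain, `Sum.inr` = marked). -/
def assemble {α : Type} : List (List α) → List α → List (α ⊕ α)
  | [], _ => []
  | w :: _, [] => w.map Sum.inl
  | w :: ws, m :: ms => w.map Sum.inl ++ Sum.inr m :: assemble ws ms

/-- The set of effects of a language. -/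
def effSet {n : ℕ} (L : Language (Sig n)) : Set (Fin n → ℤ) :=
  {v | ∃ w ∈ L, wordEff w = v}

/-- `Mod(μ, v)`. -/
def ModLang (n μ : ℕ) (v : Fin n → ℤ) : Language (Sig n) :=
  {w | ∀ j, wordEff w j ≡ v j [ZMOD (μ : ℤ)]}

/-- `ModSet(μ, v)`: base `v`, periods `{±μ·e_i}`. -/
def ModSet (n μ : ℕ) (v : Fin n → ℤ) : LinSet n where
  base := v
  periods := (Set.range fun i : Fin n => (μ : ℤ) • Pi.single i (1 : ℤ)) ∪
    (Set.range fun i : Fin n => -((μ : ℤ) • Pi.single i (1 : ℤ)))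
  finP := (Set.finite_range _).union (Set.finite_range _)

/-- `Cov(k, i)`. -/
def CovLang (n k : ℕ) (i : Fin n) : Language (Sig n) :=
  {x | ∃ w w', x = w ++ w' ∧ wordEff w i < 0 ∧
      ∀ u, u <+: w → u ≠ w → 0 ≤ wordEff u i ∧ wordEff u i ≤ (k : ℤ)}

/-- `L_{neg,i}`: base `-e_i`, periods `{±e_j : j ≠ i}`. -/
def LNeg (n : ℕ) (i : Fin n) : LinSet n where
  base := -Pi.single i 1
  periods := ((fun j : Fin n => Pi.single j (1 : ℤ)) '' {j | j ≠ i}) ∪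
    ((fun j : Fin n => -Pi.single j (1 : ℤ)) '' {j | j ≠ i})
  finP := ((Set.toFinite _).image _).union ((Set.toFinite _).image _)

/-- `Z`: base `0`, periods `{±e_j}`. -/
def ZSet (n : ℕ) : LinSet n where
  base := 0
  periods := (Set.range fun j : Fin n => Pi.single j (1 : ℤ)) ∪
    (Set.range fun j : Fin n => -Pi.single j (1 : ℤ))
  finP := (Set.finite_range _).union (Set.finite_range _)

/-! The language `C_ℓ` over `Σ₂` -/

def ltrA1 : Sig 2 := (0, true)
def ltrA2 : Sig 2 := (1, true)
def ltrB1 : Sig 2 := (0, false)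
def ltrB2 : Sig 2 := (1, false)

def fwdWord (j : ℕ) : List (Sig 2) := ltrA1 :: List.replicate j ltrA2
def bwdWord (j : ℕ) : List (Sig 2) := ltrB1 :: List.replicate j ltrB2

def segLang (j : ℕ) : Language (Sig 2) :=
  KStar.kstar ({fwdWord j, bwdWord j} : Language (Sig 2))

def aPlusLang : Language (Sig 2) :=
  {w | ∃ m : ℕ, 0 < m ∧ w = List.replicate m ltrA1}

def CLang (ℓ : ℕ) : Language (Sig 2) :=
  aPlusLang * ((List.range ℓ).map (fun j => segLang (j + 1))).prod


namespace S18

open List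

variable {n : ℕ}

/-! ### basic wordEff lemmas -/

theorem wordEff_nil : wordEff ([] : List (Sig n)) = 0 := rfl

theorem wordEff_cons (a : Sig n) (w : List (Sig n)) :
    wordEff (a :: w) = letterEff a + wordEff w := by
  simp [wordEff]

theorem wordEff_append (u v : List (Sig n)) :
    wordEff (u ++ v) = wordEff u + wordEff v := by
  simp [wordEff]

theorem wordEff_replicate (q : ℕ) (a : Sig n) :
    wordEff (List.replicate q a) = q • letterEff a := by
  simp [wordEff]

theorem wordEff_flatten_replicate (q : ℕ) (b : List (Sig n)) :
    wordEff ((List.replicate q b).flatten) = q • wordEff b := by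
  induction q with
  | zero => simp [wordEff]
  | succ q ih =>
    rw [List.replicate_succ, List.flatten_cons, wordEff_append, ih, succ_nsmul]
    abel

/-! ### two-coordinate vectors -/

/-- vector supported on two coordinates -/
def vec2 (c0 c1 : Fin n) (x y : ℤ) : Fin n → ℤ :=
  fun c => if c = c0 then x else if c = c1 then y else 0

theorem vec2_apply0 {c0 c1 : Fin n} (hne : c0 ≠ c1) (x y : ℤ) :
    vec2 c0 c1 x y c0 = x := by simp [vec2]

theorem vec2_apply1 {c0 c1 : Fin n} (hne : c0 ≠ c1) (x y : ℤ) :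
    vec2 c0 c1 x y c1 = y := by
  simp only [vec2]
  rw [if_neg (fun h => hne h.symm)]
  simp

theorem vec2_add {c0 c1 : Fin n} (x y x' y' : ℤ) :
    vec2 c0 c1 x y + vec2 c0 c1 x' y' = vec2 c0 c1 (x + x') (y + y') := by
  funext c; simp only [Pi.add_apply, vec2]
  split_ifs <;> ring

theorem vec2_nsmul {c0 c1 : Fin n} (q : ℕ) (x y : ℤ) :
    q • vec2 c0 c1 x y = vec2 c0 c1 (q * x) (q * y) := by
  funext c; simp only [Pi.smul_apply, vec2]
  split_ifs <;> simp

theorem vec2_zero {c0 c1 : Fin n} : vec2 c0 c1 0 0 = 0 := by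
  funext c; simp [vec2]

theorem vec2_nonneg {c0 c1 : Fin n} {x y : ℤ} (hx : 0 ≤ x) (hy : 0 ≤ y) (c : Fin n) :
    0 ≤ vec2 c0 c1 x y c := by
  simp only [vec2]; split_ifs <;> simp [hx, hy]

theorem letterEff_A1 {c0 c1 : Fin n} : letterEff ((c0, true) : Sig n) = vec2 c0 c1 1 0 := by
  funext c; simp only [letterEff, vec2]
  by_cases h : c = c0 <;> simp [h]

theorem letterEff_B1 {c0 c1 : Fin n} : letterEff ((c0, false) : Sig n) = vec2 c0 c1 (-1) 0 := by
  funext c; simp only [letterEff, vec2]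
  by_cases h : c = c0 <;> simp [h]

theorem letterEff_A2 {c0 c1 : Fin n} (hne : c0 ≠ c1) :
    letterEff ((c1, true) : Sig n) = vec2 c0 c1 0 1 := by
  funext c; simp only [letterEff, vec2]
  by_cases h : c = c0
  · subst h; simp [hne]
  · simp [h]

theorem letterEff_B2 {c0 c1 : Fin n} (hne : c0 ≠ c1) :
    letterEff ((c1, false) : Sig n) = vec2 c0 c1 0 (-1) := by
  funext c; simp only [letterEff, vec2]
  by_cases h : c = c0
  · subst h; simp [hne]
  · simp [h]

/-! ### prefix helpers -/

theorem prefix_cases {α : Type*} {u x y : List α} (h : u <+: x ++ y) :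
    u <+: x ∨ ∃ v, v <+: y ∧ u = x ++ v := by
  rcases le_or_gt u.length x.length with hle | hlt
  · exact Or.inl (List.prefix_of_prefix_length_le h (List.prefix_append x y) hle)
  · right
    have hx : x <+: u := List.prefix_of_prefix_length_le (List.prefix_append x y) h (le_of_lt hlt)
    rcases hx with ⟨v, hv⟩
    refine ⟨v, ?_, hv.symm⟩
    rcases h with ⟨t, ht⟩
    rw [← hv, List.append_assoc] at ht
    exact ⟨t, (List.append_cancel_left ht)⟩

theorem prefix_replicate {α : Type*} {u : List α} {a : α} {q : ℕ} (h : u <+: List.replicate q a) :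
    u = List.replicate u.length a ∧ u.length ≤ q := by
  have hlen : u.length ≤ q := by
    have := h.length_le; simpa using this
  constructor
  · have : u = (List.replicate q a).take u.length := by
      rcases h with ⟨t, ht⟩
      rw [← ht, List.take_left' rfl]
    conv_lhs => rw [this]
    rw [List.take_replicate, min_eq_left hlen]
  · exact hlen

theorem prefix_singleton {α : Type*} {u : List α} {a : α} (h : u <+: [a]) :
    u = [] ∨ u = [a] := by
  have := prefix_replicate (q := 1) (a := a) (by simpa using h)
  rcases this with ⟨h1, h2⟩
  interval_cases h' : u.length
  · simp_all
  · simp_all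

end S18
namespace S18

open List

variable {n : ℕ}

/-! ### blocks, runs, phases, witness word -/

/-- forward (climb) block of slope `j` -/
def fwdB (c0 c1 : Fin n) (j : ℕ) : List (Sig n) :=
  List.replicate j (c1, true) ++ [(c0, true)]

/-- backward (fall) block of slope `j` -/
def bwdB (c0 c1 : Fin n) (j : ℕ) : List (Sig n) :=
  List.replicate j (c1, false) ++ [(c0, false)]

def upRun (c0 c1 : Fin n) (j q : ℕ) : List (Sig n) := (List.replicate q (fwdB c0 c1 j)).flatten

def dnRun (c0 c1 : Fin n) (j q : ℕ) : List (Sig n) := (List.replicate q (bwdB c0 c1 j)).flatten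

def phaseW (c0 c1 : Fin n) (Λ j : ℕ) : List (Sig n) :=
  upRun c0 c1 j Λ ++ dnRun c0 c1 j Λ

def phasesW (c0 c1 : Fin n) (Λ s len : ℕ) : List (Sig n) :=
  ((List.range' s len).map (phaseW c0 c1 Λ)).flatten

/-- The witness word. -/
def wW (c0 c1 : Fin n) (Λ N m : ℕ) : List (Sig n) :=
  List.replicate m (c0, true) ++ phasesW c0 c1 Λ 1 N

variable {c0 c1 : Fin n} (hne : c0 ≠ c1)
include hne

theorem eff_fwdB (j : ℕ) : wordEff (fwdB c0 c1 j) = vec2 c0 c1 1 j := by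
  rw [fwdB, wordEff_append, wordEff_replicate, letterEff_A2 hne, vec2_nsmul]
  show _ + wordEff [(c0,true)] = _
  rw [wordEff_cons, wordEff_nil, add_zero, letterEff_A1 (c1 := c1), vec2_add]
  norm_num

theorem eff_bwdB (j : ℕ) : wordEff (bwdB c0 c1 j) = vec2 c0 c1 (-1) (-j) := by
  rw [bwdB, wordEff_append, wordEff_replicate, letterEff_B2 hne, vec2_nsmul]
  show _ + wordEff [(c0,false)] = _
  rw [wordEff_cons, wordEff_nil, add_zero, letterEff_B1 (c1 := c1), vec2_add]
  norm_num

theorem eff_upRun (j q : ℕ) : wordEff (upRun c0 c1 j q) = vec2 c0 c1 q (q * j) := by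
  rw [upRun, wordEff_flatten_replicate, eff_fwdB hne, vec2_nsmul, mul_one]

theorem eff_dnRun (j q : ℕ) : wordEff (dnRun c0 c1 j q) = vec2 c0 c1 (-q) (-(q * j)) := by
  rw [dnRun, wordEff_flatten_replicate, eff_bwdB hne, vec2_nsmul]
  norm_num

theorem eff_phaseW (Λ j : ℕ) : wordEff (phaseW c0 c1 Λ j) = 0 := by
  rw [phaseW, wordEff_append, eff_upRun hne, eff_dnRun hne, vec2_add]
  simp [vec2_zero]

theorem eff_phasesW (Λ s len : ℕ) : wordEff (phasesW c0 c1 Λ s len) = 0 := by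
  induction len generalizing s with
  | zero => simp [phasesW, wordEff]
  | succ len ih =>
    rw [phasesW, List.range'_succ, List.map_cons, List.flatten_cons, wordEff_append,
      eff_phaseW hne]
    simpa [phasesW] using ih (s + 1)

theorem eff_wW (Λ N m : ℕ) : wordEff (wW c0 c1 Λ N m) = vec2 c0 c1 m 0 := by
  rw [wW, wordEff_append, eff_phasesW hne, add_zero, wordEff_replicate,
    letterEff_A1 (c1 := c1), vec2_nsmul]
  norm_num

/-! ### prefix bounds -/

/-- prefixes of a climb block have nonneg effect -/
theorem pref_fwdB {u : List (Sig n)} {j : ℕ} (h : u <+: fwdB c0 c1 j) (c : Fin n) :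
    0 ≤ wordEff u c := by
  rcases prefix_cases h with h' | ⟨v, hv, rfl⟩
  · obtain ⟨h1, -⟩ := prefix_replicate h'
    rw [h1, wordEff_replicate, letterEff_A2 hne, vec2_nsmul]
    exact vec2_nonneg (by positivity) (by positivity) c
  · rcases prefix_singleton hv with rfl | rfl
    · rw [wordEff_append, wordEff_nil, add_zero, wordEff_replicate, letterEff_A2 hne, vec2_nsmul]
      exact vec2_nonneg (by positivity) (by positivity) c
    · have : List.replicate j ((c1,true) : Sig n) ++ [(c0,true)] = fwdB c0 c1 j := rfl
      rw [this, eff_fwdB hne]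
      exact vec2_nonneg (by norm_num) (by positivity) c

/-- prefixes of a fall block have effect at least that of the whole block -/
theorem pref_bwdB {u : List (Sig n)} {j : ℕ} (h : u <+: bwdB c0 c1 j) (c : Fin n) :
    wordEff (bwdB c0 c1 j) c ≤ wordEff u c := by
  rw [eff_bwdB hne]
  rcases prefix_cases h with h' | ⟨v, hv, rfl⟩
  · obtain ⟨h1, hlen⟩ := prefix_replicate h'
    rw [h1, wordEff_replicate, letterEff_B2 hne, vec2_nsmul]
    simp only [vec2]
    split_ifs <;> simp <;> omega
  · rcases prefix_singleton hv with rfl | rfl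
    · rw [wordEff_append, wordEff_nil, add_zero, wordEff_replicate, letterEff_B2 hne, vec2_nsmul]
      simp only [vec2]
      split_ifs <;> simp
    · have : List.replicate j ((c1,false) : Sig n) ++ [(c0,false)] = bwdB c0 c1 j := rfl
      rw [this, eff_bwdB hne]

theorem eff_bwdB_nonpos (j : ℕ) (c : Fin n) : wordEff (bwdB c0 c1 j) c ≤ 0 := by
  rw [eff_bwdB hne]
  simp only [vec2]
  split_ifs <;> simp

/-- prefixes of a repeated climb run are nonneg -/
theorem pref_upRun {u : List (Sig n)} {j q : ℕ} (h : u <+: upRun c0 c1 j q) (c : Fin n) :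
    0 ≤ wordEff u c := by
  induction q generalizing u with
  | zero => simp [upRun] at h; subst h; simp [wordEff]
  | succ q ih =>
    rw [upRun, List.replicate_succ, List.flatten_cons] at h
    rcases prefix_cases h with h' | ⟨v, hv, rfl⟩
    · exact pref_fwdB hne h' c
    · rw [wordEff_append]
      have h1 := pref_fwdB hne (List.prefix_refl (fwdB c0 c1 j)) c
      have h2 := ih hv
      have := add_le_add h1 h2
      simpa using this

/-- prefixes of a repeated fall run are bounded below by the total effect -/
theorem pref_dnRun {u : List (Sig n)} {j q : ℕ} (h : u <+: dnRun c0 c1 j q) (c : Fin n) :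
    wordEff (dnRun c0 c1 j q) c ≤ wordEff u c := by
  induction q generalizing u with
  | zero =>
    simp [dnRun] at h; subst h; simp [dnRun, wordEff]
  | succ q ih =>
    rw [dnRun, List.replicate_succ, List.flatten_cons] at h
    have keyeq : wordEff (dnRun c0 c1 j (q+1)) = wordEff (bwdB c0 c1 j) + wordEff (dnRun c0 c1 j q) := by
      rw [dnRun, List.replicate_succ, List.flatten_cons, wordEff_append]; rfl
    rcases prefix_cases h with h' | ⟨v, hv, rfl⟩
    · have h1 := pref_bwdB hne h' c
      have h2 : wordEff (dnRun c0 c1 j q) c ≤ 0 := by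
        rw [eff_dnRun hne]
        simp only [vec2]; split_ifs <;> simp <;> positivity
      rw [keyeq]
      simp only [Pi.add_apply]
      omega
    · rw [keyeq, wordEff_append]
      simp only [Pi.add_apply]
      have := ih hv
      omega

/-- prefixes of a phase are nonneg -/
theorem pref_phaseW {u : List (Sig n)} {Λ j : ℕ} (h : u <+: phaseW c0 c1 Λ j) (c : Fin n) :
    0 ≤ wordEff u c := by
  rw [phaseW] at h
  rcases prefix_cases h with h' | ⟨v, hv, rfl⟩
  · exact pref_upRun hne h' c
  · rw [wordEff_append]
    have h2 := pref_dnRun hne hv c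
    have : wordEff (upRun c0 c1 j Λ) c + wordEff (dnRun c0 c1 j Λ) c = 0 := by
      have : wordEff (upRun c0 c1 j Λ) + wordEff (dnRun c0 c1 j Λ) = 0 := by
        rw [eff_upRun hne, eff_dnRun hne, vec2_add]
        simp [vec2_zero]
      calc wordEff (upRun c0 c1 j Λ) c + wordEff (dnRun c0 c1 j Λ) c
          = (wordEff (upRun c0 c1 j Λ) + wordEff (dnRun c0 c1 j Λ)) c := rfl
        _ = 0 := by rw [this]; rfl
    simp only [Pi.add_apply]
    omega

/-- prefixes of a concatenation of phases are nonneg -/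
theorem pref_phasesW {u : List (Sig n)} {Λ s len : ℕ} (h : u <+: phasesW c0 c1 Λ s len)
    (c : Fin n) : 0 ≤ wordEff u c := by
  induction len generalizing u s with
  | zero => simp [phasesW] at h; subst h; simp [wordEff]
  | succ len ih =>
    rw [phasesW, List.range'_succ, List.map_cons, List.flatten_cons] at h
    rcases prefix_cases h with h' | ⟨v, hv, rfl⟩
    · exact pref_phaseW hne h' c
    · rw [wordEff_append, eff_phaseW hne]
      simpa using ih (s := s + 1) hv

/-- P1 : all prefixes of the witness are componentwise nonneg -/
theorem pref_wW {u : List (Sig n)} {Λ N m : ℕ} (h : u <+: wW c0 c1 Λ N m) (c : Fin n) :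
    0 ≤ wordEff u c := by
  rw [wW] at h
  rcases prefix_cases h with h' | ⟨v, hv, rfl⟩
  · obtain ⟨h1, -⟩ := prefix_replicate h'
    rw [h1, wordEff_replicate, letterEff_A1 (c1 := c1), vec2_nsmul]
    exact vec2_nonneg (by positivity) (by norm_num) c
  · rw [wordEff_append, wordEff_replicate, letterEff_A1 (c1 := c1), vec2_nsmul]
    have h1 := vec2_nonneg (c0 := c0) (c1 := c1) (x := (m:ℤ)*1) (y := (m:ℤ)*0) (by positivity) (by norm_num) c
    have h2 := pref_phasesW hne hv c
    simp only [Pi.add_apply]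
    omega

/-- P2 : long prefixes of the witness dominate `vec2 m 0` -/
theorem pref_wW_long {u : List (Sig n)} {Λ N m : ℕ} (h : u <+: wW c0 c1 Λ N m)
    (hlen : m ≤ u.length) (c : Fin n) : vec2 c0 c1 m 0 c ≤ wordEff u c := by
  rw [wW] at h
  rcases prefix_cases h with h' | ⟨v, hv, rfl⟩
  · obtain ⟨h1, h2⟩ := prefix_replicate h'
    have h3 : u.length = m := le_antisymm h2 hlen
    rw [h1, h3, wordEff_replicate, letterEff_A1 (c1 := c1), vec2_nsmul]
    simp
  · rw [wordEff_append, wordEff_replicate, letterEff_A1 (c1 := c1), vec2_nsmul]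
    have h2 := pref_phasesW hne hv c
    simp only [Pi.add_apply, mul_one, mul_zero]
    omega

end S18
namespace S18

open List

variable {n : ℕ}

/-! ### KReach lemmas -/

theorem kreach_box_left {L : LinSet n} {k : ℕ} {x y : Fin n → ℤ} {w : List (Sig n)}
    (h : KReach L k x w y) : inBox k x := by
  cases h with
  | refl _ h => exact h
  | letter a h h' _ => exact h
  | eps hp h h' _ => exact h

theorem kreach_box_right {L : LinSet n} {k : ℕ} {x y : Fin n → ℤ} {w : List (Sig n)}
    (h : KReach L k x w y) : inBox k y := by
  induction h with
  | refl _ h => exact h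
  | letter a h h' _ ih => exact ih
  | eps hp h h' _ ih => exact ih

theorem kreach_eff {L : LinSet n} {k : ℕ} {x y : Fin n → ℤ} {w : List (Sig n)}
    (h : KReach L k x w y) :
    ∃ ρ ∈ AddSubmonoid.closure L.periods, wordEff w = y - x + ρ := by
  induction h with
  | refl z h => exact ⟨0, AddSubmonoid.zero_mem _, by simp [wordEff]⟩
  | letter a h h' _ ih =>
    obtain ⟨ρ, hρ, heff⟩ := ih
    refine ⟨ρ, hρ, ?_⟩
    rw [wordEff_cons, heff]
    abel
  | eps hp h h' _ ih =>
    obtain ⟨ρ, hρ, heff⟩ := ih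
    refine ⟨_ + ρ, AddSubmonoid.add_mem _ (AddSubmonoid.subset_closure hp) hρ, ?_⟩
    rw [heff]
    abel

theorem kreach_append {L : LinSet n} {k : ℕ} {x y z : Fin n → ℤ} {u v : List (Sig n)}
    (h1 : KReach L k x u y) (h2 : KReach L k y v z) : KReach L k x (u ++ v) z := by
  induction h1 with
  | refl _ _ => exact h2
  | letter a h h' _ ih => exact KReach.letter a h h' (ih h2)
  | eps hp h h' _ ih => exact KReach.eps hp h h' (ih h2)

theorem kreach_split {L : LinSet n} {k : ℕ} {x y : Fin n → ℤ} {w : List (Sig n)}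
    (h : KReach L k x w y) :
    ∀ u v, w = u ++ v → ∃ z, KReach L k x u z ∧ KReach L k z v y := by
  induction h with
  | refl s hbox =>
    intro u v huv
    have hu : u = [] := by
      cases u with
      | nil => rfl
      | cons a t => simp at huv
    have hv : v = [] := by
      rw [hu] at huv; simpa using huv
    subst hu; subst hv
    exact ⟨s, KReach.refl s hbox, KReach.refl s hbox⟩
  | @letter x' y' w' a h h' hr ih =>
    intro u v huv
    cases u with
    | nil =>
      refine ⟨x', KReach.refl x' h, ?_⟩
      simp only [List.nil_append] at huv
      rw [← huv]
      exact KReach.letter a h h' hr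
    | cons b u' =>
      simp only [List.cons_append, List.cons.injEq] at huv
      obtain ⟨rfl, hw⟩ := huv
      obtain ⟨z, h1, h2⟩ := ih u' v hw
      exact ⟨z, KReach.letter a h h' h1, h2⟩
  | eps hp h h' hr ih =>
    intro u v huv
    obtain ⟨z, h1, h2⟩ := ih u v huv
    exact ⟨z, KReach.eps hp h h' h1, h2⟩

theorem kreach_chunks {L : LinSet n} {k : ℕ} {x y : Fin n → ℤ} {b : List (Sig n)} {q : ℕ}
    (h : KReach L k x ((List.replicate q b).flatten) y) :
    ∃ f : ℕ → (Fin n → ℤ), f 0 = x ∧ ∀ r, r < q → KReach L k (f r) b (f (r + 1)) := by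
  induction q generalizing x with
  | zero => exact ⟨fun _ => x, rfl, by omega⟩
  | succ q ih =>
    rw [List.replicate_succ, List.flatten_cons] at h
    obtain ⟨z, h1, h2⟩ := kreach_split h b ((List.replicate q b).flatten) rfl
    obtain ⟨f', hf0, hf⟩ := ih h2
    refine ⟨fun r => if r = 0 then x else f' (r - 1), rfl, ?_⟩
    intro r hr
    cases r with
    | zero => simpa [hf0] using h1
    | succ r => simpa using hf r (by omega)

theorem kreach_chain {L : LinSet n} {k : ℕ} {b : List (Sig n)} {q : ℕ} {f : ℕ → (Fin n → ℤ)}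
    (hf : ∀ r, r < q → KReach L k (f r) b (f (r + 1)))
    (hbox : ∀ r, r ≤ q → inBox k (f r)) :
    ∀ i j, i ≤ j → j ≤ q → KReach L k (f i) ((List.replicate (j - i) b).flatten) (f j) := by
  intro i j hij hjq
  induction j, hij using Nat.le_induction with
  | base => simpa using KReach.refl (f i) (hbox i (le_trans (le_refl i) (by omega)))
  | succ j hij ih =>
    have h1 : KReach L k (f i) ((List.replicate (j - i) b).flatten) (f j) := ih (by omega)
    have h2 : KReach L k (f j) b (f (j + 1)) := hf j (by omega)
    have h3 := kreach_append h1 h2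
    have : j + 1 - i = (j - i) + 1 := by omega
    rw [this, List.replicate_succ', List.flatten_append]
    simpa using h3

theorem chunk_currency {L : LinSet n} {k : ℕ} {x y : Fin n → ℤ} {b : List (Sig n)} {q : ℕ}
    (h : KReach L k x ((List.replicate q b).flatten) y) (hq : (2 * k + 1) ^ n < q) :
    ∃ d, 1 ≤ d ∧ d ≤ q ∧ (d • wordEff b) ∈ AddSubmonoid.closure L.periods := by
  obtain ⟨f, hf0, hf⟩ := kreach_chunks h
  have hq1 : 1 ≤ q := le_trans (Nat.one_le_iff_ne_zero.2 (by positivity)) (le_of_lt hq)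
  have hbox : ∀ r, r ≤ q → inBox k (f r) := by
    intro r hr
    rcases lt_or_eq_of_le hr with hr' | rfl
    · exact kreach_box_left (hf r hr')
    · have hb := kreach_box_right (hf (r - 1) (by omega))
      have heq : r - 1 + 1 = r := by omega
      rwa [heq] at hb
  classical
  have key : ∀ i j : ℕ, i < j → j ≤ q → f i = f j →
      ∃ d, 1 ≤ d ∧ d ≤ q ∧ (d • wordEff b) ∈ AddSubmonoid.closure L.periods := by
    intro i j hlt hjq hfeq
    have hr := kreach_chain hf hbox i j (le_of_lt hlt) hjq
    obtain ⟨ρ, hρ, heff⟩ := kreach_eff hr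
    refine ⟨j - i, by omega, by omega, ?_⟩
    rw [wordEff_flatten_replicate] at heff
    rw [heff, hfeq]
    simpa using hρ
  set T : Finset (Fin n → ℤ) := Fintype.piFinset (fun _ : Fin n => Finset.Icc (-(k:ℤ)) k) with hT
  have hcardT : T.card = (2 * k + 1) ^ n := by
    rw [hT, Fintype.card_piFinset]
    have h1 : ∀ _i : Fin n, (Finset.Icc (-(k:ℤ)) (k:ℤ)).card = 2 * k + 1 := by
      intro _i
      rw [Int.card_Icc]
      omega
    rw [Finset.prod_congr rfl (fun i _ => h1 i), Finset.prod_const, Finset.card_univ,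
      Fintype.card_fin]
  have hmaps : ∀ r : Fin (q + 1), (fun r : Fin (q+1) => f r.val) r ∈ T := by
    intro r
    rw [hT, Fintype.mem_piFinset]
    intro c
    rw [Finset.mem_Icc]
    exact (hbox r.val (by omega) c)
  have hcard : T.card < (Finset.univ : Finset (Fin (q+1))).card := by
    rw [hcardT, Finset.card_univ, Fintype.card_fin]
    omega
  obtain ⟨i, -, j, -, hij, hfeq⟩ :=
    Finset.exists_ne_map_eq_of_card_lt_of_maps_to hcard (fun r _ => hmaps r)
  rcases Nat.lt_or_ge i.val j.val with hlt | hge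
  · exact key i.val j.val hlt (by omega) hfeq
  · have hlt' : j.val < i.val := by
      rcases Nat.lt_or_ge j.val i.val with h' | h'
      · exact h'
      · exact absurd (Fin.ext (show i.val = j.val by omega)) hij
    exact key j.val i.val hlt' (by omega) hfeq.symm

end S18
namespace S18

open List

variable {n : ℕ}

theorem smul_mem_closure_of_dvd {P : Set (Fin n → ℤ)} {v : Fin n → ℤ} {d M : ℕ}
    (h : d • v ∈ AddSubmonoid.closure P) (hd : d ∣ M) : M • v ∈ AddSubmonoid.closure P := by
  obtain ⟨c, rfl⟩ := hd
  rw [mul_comm, mul_smul]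
  exact AddSubmonoid.nsmul_mem _ h c

theorem toSet_add_closure {L : LinSet n} {a ρ : Fin n → ℤ} (ha : a ∈ L.toSet)
    (hρ : ρ ∈ AddSubmonoid.closure L.periods) : a + ρ ∈ L.toSet := by
  obtain ⟨p, hp, rfl⟩ := ha
  exact ⟨p + ρ, AddSubmonoid.add_mem _ hp hρ, by abel⟩

theorem eff_mem_toSet {L : LinSet n} {k : ℕ} {u : List (Sig n)} (h : u ∈ KApprox L k) :
    wordEff u ∈ L.toSet := by
  obtain ⟨y, hr, hy⟩ := h
  obtain ⟨ρ, hρ, heff⟩ := kreach_eff hr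
  have : wordEff u = y + ρ := by rw [heff]; abel
  rw [this]
  exact toSet_add_closure hy hρ

/-! ### factorization of membership in a product of languages -/

theorem mem_prod_factor {α β : Type*} (f : β → Language α) :
    ∀ (Ls : List β) (w : List α), w ∈ (Ls.map f).prod →
      ∃ us : List (List α), us.length = Ls.length ∧ w = us.flatten ∧
        ∀ i (h1 : i < us.length) (h2 : i < Ls.length), us[i] ∈ f Ls[i] := by
  intro Ls
  induction Ls with
  | nil =>
    intro w hw
    refine ⟨[], rfl, ?_, fun i h1 h2 => by simp at h1⟩
    simpa [Language.mem_one] using hw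
  | cons L Ls ih =>
    intro w hw
    rw [List.map_cons, List.prod_cons, Language.mem_mul] at hw
    obtain ⟨a, ha, b, hb, rfl⟩ := hw
    obtain ⟨us, hlen, rfl, hmem⟩ := ih b hb
    refine ⟨a :: us, by simpa using hlen, by simp, ?_⟩
    intro i h1 h2
    cases i with
    | zero => simpa using ha
    | succ i => simpa using hmem i (by simpa using h1) (by simpa using h2)

/-! ### membership in posFold -/

theorem posFoldAux_mem (as : List (Fin n → ℤ)) :
    ∀ (Ss : List (Set (Fin n → ℤ))) (S : Set (Fin n → ℤ)) (s : Fin n → ℤ),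
      s ∈ S → as.length = Ss.length →
      (∀ i (h1 : i < as.length) (h2 : i < Ss.length), as[i] ∈ Ss[i]) →
      (0 < as.length → ∀ i, i ≤ as.length → ∀ c, 0 ≤ (s + (as.take i).sum) c) →
      s + as.sum ∈ posFoldAux S Ss := by
  induction as with
  | nil =>
    intro Ss S s hs hlen _ _
    have : Ss = [] := by
      cases Ss with
      | nil => rfl
      | cons a b => simp at hlen
    subst this
    simpa [posFoldAux] using hs
  | cons a as ih =>
    intro Ss S s hs hlen hmem hpos
    cases Ss with
    | nil => simp at hlen
    | cons T Ts =>
      have hmem0 : a ∈ T := by exact hmem 0 (by simp) (by simp)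
      have hsa : s + a ∈ posPlus S T := by
        refine ⟨?_, s, hs, ?_, a, hmem0, rfl⟩
        · intro c
          have := hpos (by simp) 1 (by simp) c
          simpa using this
        · intro c
          have := hpos (by simp) 0 (by simp) c
          simpa using this
      have := ih Ts (posPlus S T) (s + a) hsa (by simpa using hlen)
        (fun i h1 h2 => by exact hmem (i+1) (Nat.succ_lt_succ h1) (Nat.succ_lt_succ h2))
        (fun hlen' i hi c => by
          have h := hpos (by simp) (i + 1) (by simpa using hi) c
          rw [List.take_succ_cons, List.sum_cons] at h
          have heq : s + (a + (List.take i as).sum) = s + a + (List.take i as).sum := by abel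
          rw [heq] at h
          exact h)
      show s + (a :: as).sum ∈ posFoldAux (posPlus S T) Ts
      rw [List.sum_cons]
      have heq : s + (a + as.sum) = (s + a) + as.sum := by abel
      rw [heq]
      exact this

theorem posFold_mem {Ss : List (Set (Fin n → ℤ))} {as : List (Fin n → ℤ)}
    (hlen : as.length = Ss.length) (h1 : 1 ≤ as.length)
    (hmem : ∀ i (ha : i < as.length) (hb : i < Ss.length), as[i] ∈ Ss[i])
    (hpos : ∀ i, 1 ≤ i → i ≤ as.length → ∀ c, 0 ≤ ((as.take i).sum) c) :
    as.sum ∈ posFold Ss := by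
  cases as with
  | nil => simp at h1
  | cons a as =>
    cases Ss with
    | nil => simp at hlen
    | cons T Ts =>
      show (a :: as).sum ∈ posFoldAux T Ts
      rw [List.sum_cons]
      exact posFoldAux_mem as Ts T a (by exact hmem 0 (by simp) (by simp))
        (by simpa using hlen)
        (fun i ha hb => by exact hmem (i+1) (Nat.succ_lt_succ ha) (Nat.succ_lt_succ hb))
        (fun hl i hi c => by
          have := hpos (i+1) (by omega) (by simpa using hi) c
          simpa using this)

end S18
namespace S18

open List

variable {n : ℕ}

/-! ### gate decomposition of the witness word -/

def preA (c0 c1 : Fin n) (Λ G m j : ℕ) : List (Sig n) :=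
  List.replicate m ((c0, true) : Sig n) ++ phasesW c0 c1 Λ 1 (j - 1) ++ upRun c0 c1 j Λ ++
    dnRun c0 c1 j (Λ - G)

def stretchW (c0 c1 : Fin n) (G j : ℕ) : List (Sig n) :=
  dnRun c0 c1 j G ++ upRun c0 c1 (j + 1) G

def postA (c0 c1 : Fin n) (Λ G N j : ℕ) : List (Sig n) :=
  upRun c0 c1 (j + 1) (Λ - G) ++ dnRun c0 c1 (j + 1) Λ ++ phasesW c0 c1 Λ (j + 2) (N - (j + 1))

theorem phasesW_split (c0 c1 : Fin n) (Λ s a b : ℕ) :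
    phasesW c0 c1 Λ s (a + b) = phasesW c0 c1 Λ s a ++ phasesW c0 c1 Λ (s + a) b := by
  rw [phasesW, phasesW, phasesW, ← List.flatten_append, ← List.map_append]
  congr 2
  have h := List.range'_append (s := s) (m := a) (n := b) (step := 1)
  simp only [one_mul] at h
  rw [h]

theorem upRun_split (c0 c1 : Fin n) (j a b : ℕ) :
    upRun c0 c1 j (a + b) = upRun c0 c1 j a ++ upRun c0 c1 j b := by
  rw [upRun, upRun, upRun, List.replicate_add, List.flatten_append]

theorem dnRun_split (c0 c1 : Fin n) (j a b : ℕ) :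
    dnRun c0 c1 j (a + b) = dnRun c0 c1 j a ++ dnRun c0 c1 j b := by
  rw [dnRun, dnRun, dnRun, List.replicate_add, List.flatten_append]

theorem phasesW_one (c0 c1 : Fin n) (Λ s : ℕ) :
    phasesW c0 c1 Λ s 1 = phaseW c0 c1 Λ s := by
  simp [phasesW, List.range'_succ]

/-- decomposition of the witness word at gate `j` -/
theorem wW_decomp {c0 c1 : Fin n} {Λ G N m j : ℕ} (h1 : 1 ≤ j) (h2 : j + 1 ≤ N)
    (hG : G ≤ Λ) :
    wW c0 c1 Λ N m = preA c0 c1 Λ G m j ++ stretchW c0 c1 G j ++ postA c0 c1 Λ G N j := by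
  have s1 : phasesW c0 c1 Λ 1 N = phasesW c0 c1 Λ 1 (j-1) ++ phasesW c0 c1 Λ j (N-(j-1)) := by
    have e : (j-1) + (N-(j-1)) = N := by omega
    conv_lhs => rw [← e]
    rw [phasesW_split]
    congr 2
    omega
  have s2 : phasesW c0 c1 Λ j (N-(j-1)) = phaseW c0 c1 Λ j ++ phasesW c0 c1 Λ (j+1) (N-j) := by
    have e : N - (j-1) = 1 + (N-j) := by omega
    rw [e, phasesW_split, phasesW_one]
  have s3 : phasesW c0 c1 Λ (j+1) (N-j) = phaseW c0 c1 Λ (j+1) ++ phasesW c0 c1 Λ (j+2) (N-(j+1)) := by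
    have e : N - j = 1 + (N-(j+1)) := by omega
    rw [e, phasesW_split, phasesW_one]
  have ephase : phaseW c0 c1 Λ j
      = upRun c0 c1 j Λ ++ (dnRun c0 c1 j (Λ - G) ++ dnRun c0 c1 j G) := by
    rw [phaseW, ← dnRun_split]
    congr 2
    omega
  have ephase2 : phaseW c0 c1 Λ (j+1)
      = (upRun c0 c1 (j+1) G ++ upRun c0 c1 (j+1) (Λ - G)) ++ dnRun c0 c1 (j+1) Λ := by
    rw [phaseW, ← upRun_split]
    congr 3
    omega
  rw [wW, s1, s2, s3, ephase, ephase2, preA, stretchW, postA]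
  simp only [List.append_assoc]

/-! ### lengths -/

theorem len_upRun (c0 c1 : Fin n) (j q : ℕ) : (upRun c0 c1 j q).length = q * (j + 1) := by
  rw [upRun, List.length_flatten]
  simp [fwdB]

theorem len_dnRun (c0 c1 : Fin n) (j q : ℕ) : (dnRun c0 c1 j q).length = q * (j + 1) := by
  rw [dnRun, List.length_flatten]
  simp [bwdB]

theorem len_phasesW_succ (c0 c1 : Fin n) (Λ s len : ℕ) :
    (phasesW c0 c1 Λ s (len + 1)).length
      = (phasesW c0 c1 Λ s len).length + 2 * Λ * (s + len + 1) := by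
  have : phasesW c0 c1 Λ s (len + 1) = phasesW c0 c1 Λ s len ++ phasesW c0 c1 Λ (s + len) 1 :=
    phasesW_split c0 c1 Λ s len 1
  rw [this, List.length_append, phasesW_one, phaseW, List.length_append, len_upRun, len_dnRun]
  ring

theorem len_preA_le (c0 c1 : Fin n) (Λ G m : ℕ) (hG : G ≤ Λ) {j : ℕ} (h1 : 1 ≤ j) :
    (preA c0 c1 Λ G m j).length + (stretchW c0 c1 G j).length ≤ (preA c0 c1 Λ G m (j+1)).length := by
  have hsp : (j + 1) - 1 = (j - 1) + 1 := by omega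
  have he : 1 + (j-1) + 1 = j + 1 := by omega
  simp only [preA, stretchW, List.length_append, hsp, len_phasesW_succ, he, len_upRun, len_dnRun]
  have hG' : (G:ℤ) ≤ (Λ:ℤ) := by exact_mod_cast hG
  zify [hG]
  nlinarith [mul_nonneg (sub_nonneg.2 hG') (show (0:ℤ) ≤ (j:ℤ)+2 by positivity),
    mul_nonneg (sub_nonneg.2 hG') (show (0:ℤ) ≤ (j:ℤ)+1 by positivity)]

theorem len_preA_mono (c0 c1 : Fin n) (Λ G m : ℕ) (hG : G ≤ Λ) :
    ∀ j j', 1 ≤ j → j < j' →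
      (preA c0 c1 Λ G m j).length + (stretchW c0 c1 G j).length ≤ (preA c0 c1 Λ G m j').length := by
  intro j j' h1 hlt
  induction j', hlt using Nat.le_induction with
  | base => exact len_preA_le c0 c1 Λ G m hG h1
  | succ j' hj ih =>
    calc (preA c0 c1 Λ G m j).length + (stretchW c0 c1 G j).length
        ≤ (preA c0 c1 Λ G m j').length := ih
      _ ≤ (preA c0 c1 Λ G m j').length + (stretchW c0 c1 G j').length := Nat.le_add_right _ _
      _ ≤ (preA c0 c1 Λ G m (j'+1)).length := len_preA_le c0 c1 Λ G m hG (by omega)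

theorem len_preA_ge (c0 c1 : Fin n) (Λ G m j : ℕ) : m ≤ (preA c0 c1 Λ G m j).length := by
  simp only [preA, List.length_append, List.length_replicate]
  omega

end S18
namespace S18

open List

/-- states of the DFA for the witness language -/
inductive St (N : ℕ) : Type
  | start | dead | bnd (j : Fin (N+1)) | fup (j i : Fin (N+1)) | fdn (j i : Fin (N+1))
  deriving DecidableEq, Fintype

variable {n : ℕ}

/-- transition function -/
def stepC (c0 c1 : Fin n) (N : ℕ) : St N → Sig n → St N
  | .start, a => if a = (c0, true) then .bnd 0 else .dead
  | .bnd j, a =>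
      if a = (c0, true) then (if j = 0 then .bnd 0 else .dead)
      else if a = (c1, true) then (if h : 1 ≤ N then .fup j ⟨1, by omega⟩ else .dead)
      else if a = (c1, false) then (if h : 1 ≤ N then .fdn j ⟨1, by omega⟩ else .dead)
      else .dead
  | .fup j i, a =>
      if a = (c1, true) then (if h : i.val + 1 ≤ N then .fup j ⟨i.val + 1, by omega⟩ else .dead)
      else if a = (c0, true) then (if j ≤ i ∧ 1 ≤ i.val then .bnd i else .dead)
      else .dead
  | .fdn j i, a =>
      if a = (c1, false) then (if h : i.val + 1 ≤ N then .fdn j ⟨i.val + 1, by omega⟩ else .dead)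
      else if a = (c0, false) then (if j ≤ i ∧ 1 ≤ i.val then .bnd i else .dead)
      else .dead
  | .dead, _ => .dead

def dfaC (c0 c1 : Fin n) (N : ℕ) : DFA (Sig n) (St N) where
  step := stepC c0 c1 N
  start := .start
  accept := {s | ∃ j, s = .bnd j}

/-- the witness language -/
def CN (c0 c1 : Fin n) (N : ℕ) : Language (Sig n) := (dfaC c0 c1 N).accepts

theorem CN_regular (c0 c1 : Fin n) (N : ℕ) : (CN c0 c1 N).IsRegular :=
  ⟨St N, inferInstance, dfaC c0 c1 N, rfl⟩

/-! ### the invariant -/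

def PrefNN (v : List (Sig n)) : Prop := ∀ u, u <+: v → ∀ c, 0 ≤ wordEff u c

def invB (c0 c1 : Fin n) (j : ℕ) (v : List (Sig n)) : Prop :=
  if j = 0 then ∃ m', 1 ≤ m' ∧ v = List.replicate m' (c0, true)
  else PrefNN v → wordEff v c1 ≤ j * wordEff v c0 - 1

def invSt (c0 c1 : Fin n) {N : ℕ} : St N → List (Sig n) → Prop
  | .start => fun v => v = []
  | .dead => fun _ => True
  | .bnd j => fun v => invB c0 c1 j.val v
  | .fup j i => fun v => ∃ v', invB c0 c1 j.val v' ∧ v = v' ++ List.replicate i.val (c1, true)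
  | .fdn j i => fun v => ∃ v', invB c0 c1 j.val v' ∧ v = v' ++ List.replicate i.val (c1, false)

variable {c0 c1 : Fin n} (hne : c0 ≠ c1)
include hne

theorem invB_step_up {j i : ℕ} (hji : j ≤ i) (hi : 1 ≤ i) {v' : List (Sig n)}
    (hb : invB c0 c1 j v') :
    invB c0 c1 i (v' ++ (List.replicate i ((c1, true) : Sig n) ++ [(c0, true)])) := by
  rw [invB, if_neg (by omega)]
  intro hpref
  have heff : wordEff (v' ++ (List.replicate i ((c1,true) : Sig n) ++ [(c0,true)]))
      = wordEff v' + vec2 c0 c1 1 (i : ℤ) := by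
    rw [wordEff_append]
    congr 1
    have : (List.replicate i ((c1,true) : Sig n) ++ [(c0,true)]) = fwdB c0 c1 i := rfl
    rw [this, eff_fwdB hne]
  rw [heff]
  simp only [Pi.add_apply, vec2_apply0 hne, vec2_apply1 hne]
  rw [invB] at hb
  by_cases hj : j = 0
  · rw [if_pos hj] at hb
    obtain ⟨m', hm', rfl⟩ := hb
    rw [wordEff_replicate, letterEff_A1 (c1 := c1), vec2_nsmul]
    rw [vec2_apply0 hne, vec2_apply1 hne]
    have h1 : (1:ℤ) * 1 ≤ (i:ℤ) * (m':ℤ) :=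
      mul_le_mul (by exact_mod_cast hi) (by exact_mod_cast hm') one_pos.le (by positivity)
    push_cast
    nlinarith
  · rw [if_neg hj] at hb
    have hpref' : PrefNN v' := by
      intro u hu c
      exact hpref u (hu.trans (List.prefix_append _ _)) c
    have h1 := hb hpref'
    have h2 : 0 ≤ wordEff v' c0 := hpref v' (List.prefix_append _ _) c0
    have h3 : (j:ℤ) * wordEff v' c0 ≤ (i:ℤ) * wordEff v' c0 :=
      mul_le_mul_of_nonneg_right (by exact_mod_cast hji) h2
    nlinarith

theorem invB_step_dn {j i : ℕ} (hji : j ≤ i) (hi : 1 ≤ i) {v' : List (Sig n)}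
    (hb : invB c0 c1 j v') :
    invB c0 c1 i (v' ++ (List.replicate i ((c1, false) : Sig n) ++ [(c0, false)])) := by
  rw [invB, if_neg (by omega)]
  intro hpref
  have heff : wordEff (v' ++ (List.replicate i ((c1,false) : Sig n) ++ [(c0,false)]))
      = wordEff v' + vec2 c0 c1 (-1) (-(i : ℤ)) := by
    rw [wordEff_append]
    congr 1
    have : (List.replicate i ((c1,false) : Sig n) ++ [(c0,false)]) = bwdB c0 c1 i := rfl
    rw [this, eff_bwdB hne]
  rw [heff]
  simp only [Pi.add_apply, vec2_apply0 hne, vec2_apply1 hne]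
  rw [invB] at hb
  by_cases hj : j = 0
  · rw [if_pos hj] at hb
    obtain ⟨m', hm', rfl⟩ := hb
    rw [wordEff_replicate, letterEff_A1 (c1 := c1), vec2_nsmul]
    rw [vec2_apply0 hne, vec2_apply1 hne]
    have h1 : (1:ℤ) * 1 ≤ (i:ℤ) * (m':ℤ) :=
      mul_le_mul (by exact_mod_cast hi) (by exact_mod_cast hm') one_pos.le (by positivity)
    push_cast
    nlinarith
  · rw [if_neg hj] at hb
    have hpref' : PrefNN v' := by
      intro u hu c
      exact hpref u (hu.trans (List.prefix_append _ _)) c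
    have h1 := hb hpref'
    have h2 : 0 ≤ wordEff v' c0 := hpref v' (List.prefix_append _ _) c0
    have h3 : (j:ℤ) * wordEff v' c0 ≤ (i:ℤ) * wordEff v' c0 :=
      mul_le_mul_of_nonneg_right (by exact_mod_cast hji) h2
    nlinarith

theorem inv_step {N : ℕ} (s : St N) (a : Sig n) (v : List (Sig n))
    (h : invSt c0 c1 s v) : invSt c0 c1 (stepC c0 c1 N s a) (v ++ [a]) := by
  have hA1 : ((c1, true) : Sig n) ≠ (c0, true) := by
    intro hc; exact hne (congrArg Prod.fst hc).symm
  have hB2A1 : ((c1, false) : Sig n) ≠ (c0, true) := by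
    intro hc; exact hne (congrArg Prod.fst hc).symm
  cases s with
  | start =>
    rw [invSt] at h
    subst h
    rw [stepC]
    split_ifs with h1
    · subst h1
      show invB c0 c1 (0 : Fin (N+1)).val _
      rw [Fin.val_zero, invB, if_pos rfl]
      exact ⟨1, le_refl 1, by simp⟩
    · trivial
  | dead => trivial
  | bnd j =>
    rw [invSt] at h
    rw [stepC]
    split_ifs with h1 h2 h3 h4 h5 h6
    · -- a = (c0,true), j = 0
      subst h1
      show invB c0 c1 (0 : Fin (N+1)).val _
      rw [Fin.val_zero, invB, if_pos rfl]
      rw [invB] at h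
      rw [if_pos (by simp [h2])] at h
      obtain ⟨m', hm', rfl⟩ := h
      exact ⟨m' + 1, by omega, by rw [List.replicate_succ']⟩
    · trivial
    · -- a = (c1,true)
      subst h3
      exact ⟨v, h, by simp⟩
    · trivial
    · subst h5
      exact ⟨v, h, by simp⟩
    · trivial
    · trivial
  | fup j i =>
    rw [invSt] at h
    obtain ⟨v', hb, rfl⟩ := h
    rw [stepC]
    split_ifs with h1 h2 h3 h4
    · subst h1
      refine ⟨v', hb, ?_⟩
      rw [List.append_assoc, ← List.replicate_succ']
    · trivial
    · subst h3
      show invB c0 c1 i.val _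
      rw [List.append_assoc]
      exact invB_step_up hne (by exact_mod_cast h4.1) h4.2 hb
    · trivial
    · trivial
  | fdn j i =>
    rw [invSt] at h
    obtain ⟨v', hb, rfl⟩ := h
    rw [stepC]
    split_ifs with h1 h2 h3 h4
    · subst h1
      refine ⟨v', hb, ?_⟩
      rw [List.append_assoc, ← List.replicate_succ']
    · trivial
    · subst h3
      show invB c0 c1 i.val _
      rw [List.append_assoc]
      exact invB_step_dn hne (by exact_mod_cast h4.1) h4.2 hb
    · trivial
    · trivial

theorem inv_eval {N : ℕ} (v : List (Sig n)) :
    invSt c0 c1 ((dfaC c0 c1 N).evalFrom (dfaC c0 c1 N).start v) v := by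
  induction v using List.reverseRecOn with
  | nil => rfl
  | append_singleton v a ih =>
    rw [DFA.evalFrom_append_singleton]
    exact inv_step hne _ a v ih

/-- The witness language is disjoint from the Dyck language. -/
theorem CN_disjoint {N : ℕ} (v : List (Sig n)) (hv : v ∈ CN c0 c1 N) : v ∉ Dyck n := by
  intro hd
  obtain ⟨heff, hpref⟩ := hd
  rw [CN, DFA.mem_accepts] at hv
  obtain ⟨j, hj⟩ := hv
  have hinv := inv_eval hne (N := N) v
  rw [DFA.eval] at hj
  rw [hj] at hinv
  rw [invSt, invB] at hinv
  split_ifs at hinv with h0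
  · obtain ⟨m', hm', rfl⟩ := hinv
    have : wordEff (List.replicate m' ((c0,true) : Sig n)) c0 = m' := by
      rw [wordEff_replicate, letterEff_A1 (c1 := c1), vec2_nsmul, vec2_apply0 hne]
      simp
    rw [heff] at this
    simp only [Pi.zero_apply] at this
    omega
  · have h1 := hinv (fun u hu c => hpref u hu c)
    rw [heff] at h1
    simp only [Pi.zero_apply] at h1
    omega

end S18
namespace S18

open List

variable {n : ℕ} {c0 c1 : Fin n} (hne : c0 ≠ c1)

theorem evalFrom_cons {N : ℕ} (s : St N) (a : Sig n) (w : List (Sig n)) :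
    (dfaC c0 c1 N).evalFrom s (a :: w) = (dfaC c0 c1 N).evalFrom (stepC c0 c1 N s a) w := rfl

include hne

theorem run_bnd0_a1 {N : ℕ} (q : ℕ) :
    (dfaC c0 c1 N).evalFrom (.bnd 0) (List.replicate q ((c0, true) : Sig n)) = .bnd 0 := by
  induction q with
  | zero => rfl
  | succ q ih =>
    rw [List.replicate_succ, evalFrom_cons]
    have : stepC c0 c1 N (.bnd 0) ((c0, true) : Sig n) = .bnd 0 := by
      rw [stepC, if_pos rfl, if_pos rfl]
    rw [this, ih]

theorem run_start {N m : ℕ} (hm : 1 ≤ m) :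
    (dfaC c0 c1 N).evalFrom .start (List.replicate m ((c0, true) : Sig n)) = .bnd 0 := by
  obtain ⟨m', rfl⟩ : ∃ m', m = m' + 1 := ⟨m - 1, by omega⟩
  rw [add_comm, List.replicate_add]
  rw [DFA.evalFrom_of_append]
  have h1 : (dfaC c0 c1 N).evalFrom .start (List.replicate 1 ((c0,true) : Sig n)) = .bnd 0 := by
    show (dfaC c0 c1 N).evalFrom .start [((c0,true) : Sig n)] = .bnd 0
    rw [show ([((c0,true):Sig n)]) = ((c0,true):Sig n) :: [] from rfl, evalFrom_cons]
    rw [stepC, if_pos rfl]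
    rfl
  rw [h1, run_bnd0_a1 hne]

theorem ne_A2_A1 : ((c1, true) : Sig n) ≠ (c0, true) := by
  intro hc; exact hne (congrArg Prod.fst hc).symm

theorem ne_B2_B1 : ((c1, false) : Sig n) ≠ (c0, false) := by
  intro hc; exact hne (congrArg Prod.fst hc).symm

theorem ne_A1_A2 : ((c0, true) : Sig n) ≠ (c1, true) := by
  intro hc; exact hne (congrArg Prod.fst hc)

theorem ne_B1_B2 : ((c0, false) : Sig n) ≠ (c1, false) := by
  intro hc; exact hne (congrArg Prod.fst hc)

theorem run_fup_a2 {N : ℕ} (j : Fin (N+1)) (s : ℕ) :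
    ∀ (r : ℕ) (hr : r + s ≤ N),
      (dfaC c0 c1 N).evalFrom (.fup j ⟨r, by omega⟩) (List.replicate s ((c1, true) : Sig n))
        = .fup j ⟨r + s, by omega⟩ := by
  induction s with
  | zero => intro r hr; simp
  | succ s ih =>
    intro r hr
    rw [List.replicate_succ, evalFrom_cons]
    have hstep : stepC c0 c1 N (.fup j ⟨r, by omega⟩) ((c1,true) : Sig n)
        = .fup j ⟨r + 1, by omega⟩ := by
      rw [stepC, if_pos rfl, dif_pos (show r + 1 ≤ N by omega)]
    rw [hstep]
    have := ih (r + 1) (by omega)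
    rw [this]
    congr 1
    exact Fin.ext (show r + 1 + s = r + (s+1) by omega)

theorem run_bnd_fwdB {N : ℕ} (j : Fin (N+1)) {i : ℕ} (hji : j.val ≤ i) (hi : 1 ≤ i)
    (hiN : i ≤ N) :
    (dfaC c0 c1 N).evalFrom (.bnd j) (fwdB c0 c1 i) = .bnd ⟨i, by omega⟩ := by
  rw [fwdB]
  obtain ⟨i', rfl⟩ : ∃ i', i = 1 + i' := ⟨i - 1, by omega⟩
  rw [List.replicate_add, List.append_assoc, DFA.evalFrom_of_append]
  have h1 : (dfaC c0 c1 N).evalFrom (.bnd j) (List.replicate 1 ((c1,true) : Sig n))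
      = .fup j ⟨1, by omega⟩ := by
    show (dfaC c0 c1 N).evalFrom (.bnd j) (((c1,true) : Sig n) :: []) = _
    rw [evalFrom_cons]
    have : stepC c0 c1 N (.bnd j) ((c1,true) : Sig n) = .fup j ⟨1, by omega⟩ := by
      rw [stepC, if_neg (ne_A2_A1 hne), if_pos rfl, dif_pos (show 1 ≤ N by omega)]
    rw [this]
    rfl
  rw [h1, DFA.evalFrom_of_append]
  have h2 := run_fup_a2 hne (N := N) j i' 1 (by omega)
  rw [h2]
  show (dfaC c0 c1 N).evalFrom _ (((c0,true) : Sig n) :: []) = _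
  rw [evalFrom_cons]
  have : stepC c0 c1 N (.fup j ⟨1 + i', by omega⟩) ((c0,true) : Sig n) = .bnd ⟨1 + i', by omega⟩ := by
    rw [stepC, if_neg (ne_A1_A2 hne), if_pos rfl, if_pos]
    constructor
    · rw [Fin.le_def]
      simpa using hji
    · show 1 ≤ 1 + i'
      omega
  rw [this]
  rfl

theorem run_fdn_b2 {N : ℕ} (j : Fin (N+1)) (s : ℕ) :
    ∀ (r : ℕ) (hr : r + s ≤ N),
      (dfaC c0 c1 N).evalFrom (.fdn j ⟨r, by omega⟩) (List.replicate s ((c1, false) : Sig n))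
        = .fdn j ⟨r + s, by omega⟩ := by
  induction s with
  | zero => intro r hr; simp
  | succ s ih =>
    intro r hr
    rw [List.replicate_succ, evalFrom_cons]
    have hstep : stepC c0 c1 N (.fdn j ⟨r, by omega⟩) ((c1,false) : Sig n)
        = .fdn j ⟨r + 1, by omega⟩ := by
      rw [stepC, if_pos rfl, dif_pos (show r + 1 ≤ N by omega)]
    rw [hstep]
    have := ih (r + 1) (by omega)
    rw [this]
    congr 1
    exact Fin.ext (show r + 1 + s = r + (s+1) by omega)

theorem run_bnd_bwdB {N : ℕ} (j : Fin (N+1)) {i : ℕ} (hji : j.val ≤ i) (hi : 1 ≤ i)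
    (hiN : i ≤ N) :
    (dfaC c0 c1 N).evalFrom (.bnd j) (bwdB c0 c1 i) = .bnd ⟨i, by omega⟩ := by
  rw [bwdB]
  obtain ⟨i', rfl⟩ : ∃ i', i = 1 + i' := ⟨i - 1, by omega⟩
  rw [List.replicate_add, List.append_assoc, DFA.evalFrom_of_append]
  have h1 : (dfaC c0 c1 N).evalFrom (.bnd j) (List.replicate 1 ((c1,false) : Sig n))
      = .fdn j ⟨1, by omega⟩ := by
    show (dfaC c0 c1 N).evalFrom (.bnd j) (((c1,false) : Sig n) :: []) = _
    rw [evalFrom_cons]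
    have : stepC c0 c1 N (.bnd j) ((c1,false) : Sig n) = .fdn j ⟨1, by omega⟩ := by
      rw [stepC]
      rw [if_neg (show ((c1,false) : Sig n) ≠ (c0,true) by intro hc; simpa using congrArg Prod.snd hc)]
      rw [if_neg (show ((c1,false) : Sig n) ≠ (c1,true) by intro hc; simpa using congrArg Prod.snd hc)]
      rw [if_pos rfl, dif_pos (show 1 ≤ N by omega)]
    rw [this]
    rfl
  rw [h1, DFA.evalFrom_of_append]
  have h2 := run_fdn_b2 hne (N := N) j i' 1 (by omega)
  rw [h2]
  show (dfaC c0 c1 N).evalFrom _ (((c0,false) : Sig n) :: []) = _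
  rw [evalFrom_cons]
  have : stepC c0 c1 N (.fdn j ⟨1 + i', by omega⟩) ((c0,false) : Sig n) = .bnd ⟨1 + i', by omega⟩ := by
    rw [stepC, if_neg (ne_B1_B2 hne), if_pos rfl, if_pos]
    constructor
    · rw [Fin.le_def]
      simpa using hji
    · show 1 ≤ 1 + i'
      omega
  rw [this]
  rfl

theorem run_upRun {N : ℕ} {i : ℕ} (hi : 1 ≤ i) (hiN : i ≤ N) (q : ℕ) :
    (dfaC c0 c1 N).evalFrom (.bnd ⟨i, by omega⟩) (upRun c0 c1 i q) = .bnd ⟨i, by omega⟩ := by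
  induction q with
  | zero => rfl
  | succ q ih =>
    rw [upRun, List.replicate_succ, List.flatten_cons, DFA.evalFrom_of_append,
      run_bnd_fwdB hne _ (by simp) hi hiN]
    exact ih

theorem run_dnRun {N : ℕ} {i : ℕ} (hi : 1 ≤ i) (hiN : i ≤ N) (q : ℕ) :
    (dfaC c0 c1 N).evalFrom (.bnd ⟨i, by omega⟩) (dnRun c0 c1 i q) = .bnd ⟨i, by omega⟩ := by
  induction q with
  | zero => rfl
  | succ q ih =>
    rw [dnRun, List.replicate_succ, List.flatten_cons, DFA.evalFrom_of_append,
      run_bnd_bwdB hne _ (by simp) hi hiN]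
    exact ih

theorem run_phase {N : ℕ} (j : Fin (N+1)) {Λ i : ℕ} (hΛ : 1 ≤ Λ) (hji : j.val ≤ i)
    (hi : 1 ≤ i) (hiN : i ≤ N) :
    (dfaC c0 c1 N).evalFrom (.bnd j) (phaseW c0 c1 Λ i) = .bnd ⟨i, by omega⟩ := by
  rw [phaseW]
  obtain ⟨Λ', rfl⟩ : ∃ l, Λ = 1 + l := ⟨Λ - 1, by omega⟩
  rw [upRun_split, DFA.evalFrom_of_append, DFA.evalFrom_of_append]
  have h1 : (dfaC c0 c1 N).evalFrom (.bnd j) (upRun c0 c1 i 1) = .bnd ⟨i, by omega⟩ := by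
    rw [upRun]
    show (dfaC c0 c1 N).evalFrom (.bnd j) (fwdB c0 c1 i ++ []) = _
    rw [DFA.evalFrom_of_append, run_bnd_fwdB hne _ hji hi hiN]
    rfl
  rw [h1, run_upRun hne hi hiN, run_dnRun hne hi hiN]

theorem run_phases {N : ℕ} {Λ : ℕ} (hΛ : 1 ≤ Λ) :
    ∀ (len s : ℕ) (j : Fin (N+1)), 1 ≤ s → j.val + 1 ≤ s → s + len ≤ N + 1 →
      ∃ j' : Fin (N+1), (dfaC c0 c1 N).evalFrom (.bnd j) (phasesW c0 c1 Λ s len) = .bnd j' := by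
  intro len
  induction len with
  | zero => intro s j _ _ _; exact ⟨j, rfl⟩
  | succ len ih =>
    intro s j hs hjs hsl
    have hsplit : phasesW c0 c1 Λ s (len + 1) = phaseW c0 c1 Λ s ++ phasesW c0 c1 Λ (s+1) len := by
      have : len + 1 = 1 + len := by omega
      rw [this, phasesW_split, phasesW_one]
    rw [hsplit, DFA.evalFrom_of_append,
      run_phase hne j hΛ (by omega) (by omega) (by omega)]

    exact ih (s+1) ⟨s, by omega⟩ (by omega) (by simp) (by omega)

/-- the witness word is in the witness language -/
theorem wW_mem_CN {N Λ m : ℕ} (hm : 1 ≤ m) (hΛ : 1 ≤ Λ) :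
    wW c0 c1 Λ N m ∈ CN c0 c1 N := by
  rw [CN, DFA.mem_accepts]
  show (dfaC c0 c1 N).evalFrom _ _ ∈ _
  rw [wW, DFA.evalFrom_of_append]
  have hstart : (dfaC c0 c1 N).start = St.start := rfl
  rw [hstart, run_start hne hm]
  obtain ⟨j', hj'⟩ := run_phases (N := N) hne hΛ N 1 0 le_rfl (by simp) (by omega)

  rw [hj']
  exact ⟨j', rfl⟩

end S18
namespace S18

open List

variable {n : ℕ}

theorem flatten_take_prefix {α : Type*} (us : List (List α)) (i : ℕ) :
    (us.take i).flatten <+: us.flatten := by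
  conv_rhs => rw [← List.take_append_drop i us]
  rw [List.flatten_append]
  exact List.prefix_append _ _

theorem flatten_take_succ {α : Type*} (us : List (List α)) (i : ℕ) (h : i < us.length) :
    (us.take (i+1)).flatten = (us.take i).flatten ++ us[i] := by
  rw [List.take_succ, List.flatten_append, List.getElem?_eq_getElem h]
  simp

theorem vlen_mono {α : Type*} (us : List (List α)) {i j : ℕ} (hij : i ≤ j) :
    ((us.take i).flatten).length ≤ ((us.take j).flatten).length := by
  have h1 : us.take i = (us.take j).take i := by
    rw [List.take_take, min_eq_left hij]
  rw [h1]
  exact (flatten_take_prefix (us.take j) i).length_le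

theorem vec2_neg_m (c0 c1 : Fin n) (m : ℤ) : vec2 c0 c1 (-m) 0 = -vec2 c0 c1 m 0 := by
  funext c
  simp only [vec2, Pi.neg_apply]
  split_ifs <;> simp

/-- The main contradiction: the witness word cannot belong to a legal product of
regular approximations. -/
theorem main_contra {c0 c1 : Fin n} (hne : c0 ≠ c1) {ℓ t k' kM : ℕ}
    (hk : k' ≤ kM) {Ls : List (LinSet n)} (ht1 : 1 ≤ t) (ht2 : t ≤ ℓ)
    (hLs : Ls.length = t)
    (hw : wW c0 c1 (2 * ((2*kM+1)^n + 1)) (ℓ+2) (Nat.factorial ((2*kM+1)^n + 1))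
      ∈ (Ls.map (fun L => KApprox L k')).prod) :
    (0 : Fin n → ℤ) ∈ posFold (Ls.map LinSet.toSet) := by
  classical
  set G : ℕ := (2*kM+1)^n + 1 with hG
  set m : ℕ := Nat.factorial G with hm
  set Λ : ℕ := 2 * G with hΛ
  set N : ℕ := ℓ + 2 with hN
  set w : List (Sig n) := wW c0 c1 Λ N m with hwdef
  have hG1 : 1 ≤ G := by omega
  have hm1 : 1 ≤ m := Nat.one_le_iff_ne_zero.2 (Nat.factorial_ne_zero G)
  have hGΛ : G ≤ Λ := by omega
  -- factorize
  obtain ⟨us, hlen, hweq, hmem⟩ := mem_prod_factor (fun L => KApprox L k') Ls w hw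
  have hust : us.length = t := by rw [hlen, hLs]
  set vlen : ℕ → ℕ := fun i => ((us.take i).flatten).length with hvlen
  -- find a free gate
  have hfree : ∃ j, 1 ≤ j ∧ j ≤ ℓ+1 ∧ ∀ i, 1 ≤ i → i ≤ t-1 →
      vlen i ≤ (preA c0 c1 Λ G m j).length ∨
      (preA c0 c1 Λ G m j).length + (stretchW c0 c1 G j).length ≤ vlen i := by
    by_contra hcon
    push_neg at hcon
    have hblocked : ∀ j : ℕ, ∃ i : ℕ, j ∈ Finset.Icc 1 (ℓ+1) →
        (i ∈ Finset.Icc 1 (t-1) ∧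
        (preA c0 c1 Λ G m j).length < vlen i ∧
        vlen i < (preA c0 c1 Λ G m j).length + (stretchW c0 c1 G j).length) := by
      intro j
      by_cases hj : j ∈ Finset.Icc 1 (ℓ+1)
      · rw [Finset.mem_Icc] at hj
        obtain ⟨i, hi1, hi2, hi3, hi4⟩ := hcon j hj.1 hj.2
        exact ⟨i, fun _ => ⟨Finset.mem_Icc.2 ⟨hi1, hi2⟩, by omega, by omega⟩⟩
      · exact ⟨0, fun h => absurd h hj⟩
    choose f hf using hblocked
    have hcard : (Finset.Icc 1 (t-1)).card < (Finset.Icc 1 (ℓ+1)).card := by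
      rw [Nat.card_Icc, Nat.card_Icc]
      omega
    obtain ⟨j1, hj1, j2, hj2, hjne, hjeq⟩ :=
      Finset.exists_ne_map_eq_of_card_lt_of_maps_to hcard (fun j hj => (hf j hj).1)
    have hkey : ∀ a b : ℕ, a ∈ Finset.Icc 1 (ℓ+1) → b ∈ Finset.Icc 1 (ℓ+1) → a < b →
        f a = f b → False := by
      intro a b ha hb hab hfeq
      have h1 := (hf a ha).2.2
      have h2 := (hf b hb).2.1
      rw [hfeq] at h1
      have hmono := len_preA_mono c0 c1 Λ G m hGΛ a b (Finset.mem_Icc.1 ha).1 hab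
      omega
    rcases Nat.lt_or_ge j1 j2 with hlt | hge
    · exact hkey j1 j2 hj1 hj2 hlt hjeq
    · have hlt2 : j2 < j1 := by omega
      exact hkey j2 j1 hj2 hj1 hlt2 hjeq.symm
  obtain ⟨jg, hjg1, hjg2, hjfree⟩ := hfree
  set A : List (Sig n) := preA c0 c1 Λ G m jg with hA
  set S : List (Sig n) := stretchW c0 c1 G jg with hS
  have hdec : w = A ++ S ++ postA c0 c1 Λ G N jg :=
    wW_decomp hjg1 (by omega) hGΛ
  have hAm : m ≤ A.length := by rw [hA]; exact len_preA_ge c0 c1 Λ G m jg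
  -- minimal cut index
  have hexist : ∃ i, A.length + S.length ≤ vlen i := by
    refine ⟨t, ?_⟩
    have : us.take t = us := List.take_of_length_le (by omega)
    show A.length + S.length ≤ ((us.take t).flatten).length
    rw [this, ← hweq, hdec]
    simp only [List.length_append]
    omega
  set istar : ℕ := Nat.find hexist with histar
  have hPi : A.length + S.length ≤ vlen istar := Nat.find_spec hexist
  have hMin : ∀ i, i < istar → vlen i < A.length + S.length := by
    intro i hi
    have := Nat.find_min hexist hi
    omega
  have histar_le : istar ≤ t := Nat.find_le (by
    have : us.take t = us := List.take_of_length_le (by omega)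
    show A.length + S.length ≤ ((us.take t).flatten).length
    rw [this, ← hweq, hdec]
    simp only [List.length_append]
    omega)
  have histar1 : 1 ≤ istar := by
    by_contra hc
    have h0 : istar = 0 := by omega
    have := hPi
    rw [h0] at this
    have hv0 : vlen 0 = 0 := by simp [hvlen]
    omega
  have hprev : vlen (istar - 1) ≤ A.length := by
    rcases Nat.eq_or_lt_of_le histar1 with h1 | h1
    · have : istar - 1 = 0 := by omega
      rw [this]
      have hv0 : vlen 0 = 0 := by simp [hvlen]
      omega
    · have hle : istar - 1 ≤ t - 1 := by omega
      have hge : 1 ≤ istar - 1 := by omega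
      rcases hjfree (istar - 1) hge hle with h | h
      · exact h
      · have := hMin (istar - 1) (by omega)
        omega
  -- surgery
  have hidx : istar - 1 < us.length := by omega
  set X : List (Sig n) := (us.take (istar - 1)).flatten with hX
  set u : List (Sig n) := us[istar - 1]'hidx with hu
  have hv : X ++ u = (us.take istar).flatten := by
    rw [hX, hu, ← flatten_take_succ us (istar - 1) hidx]
    have h2 : istar - 1 + 1 = istar := by omega
    rw [h2]
  have hXw : X <+: w := by rw [hweq]; exact flatten_take_prefix us _
  have hAw : A <+: w := by
    rw [hdec, List.append_assoc]
    exact List.prefix_append _ _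
  have hXA : X <+: A := List.prefix_of_prefix_length_le hXw hAw hprev
  obtain ⟨x, hx⟩ := hXA
  have hASw : A ++ S <+: w := by
    rw [hdec]
    exact List.prefix_append _ _
  have hTw : (us.take istar).flatten <+: w := by rw [hweq]; exact flatten_take_prefix us _
  have hAST : A ++ S <+: (us.take istar).flatten := by
    refine List.prefix_of_prefix_length_le hASw hTw ?_
    rw [List.length_append]
    exact hPi
  obtain ⟨y, hy⟩ := hAST
  have husplit : u = x ++ (S ++ y) := by
    have h1 : X ++ u = (A ++ S) ++ y := by rw [hv, hy]
    rw [← hx] at h1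
    have h2 : X ++ u = X ++ (x ++ (S ++ y)) := by
      rw [h1]
      simp only [List.append_assoc]
    exact List.append_cancel_left h2
  -- the run and the currencies
  have hum : u ∈ KApprox (Ls[istar - 1]'(by omega)) k' := by
    have := hmem (istar - 1) (by omega) (by omega)
    exact this
  obtain ⟨yfin, hrun, hyset⟩ := hum
  rw [husplit] at hrun
  obtain ⟨z1, hrun1, hrun2⟩ := kreach_split hrun x (S ++ y) rfl
  have hSdef : S = dnRun c0 c1 jg G ++ upRun c0 c1 (jg+1) G := hS.trans rfl
  obtain ⟨z2, hrun3, hrun4⟩ := kreach_split hrun2 (dnRun c0 c1 jg G) (upRun c0 c1 (jg+1) G ++ y)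
    (by rw [hSdef, List.append_assoc])
  obtain ⟨z3, hrun5, hrun6⟩ := kreach_split hrun4 (upRun c0 c1 (jg+1) G) y rfl
  have hGk : (2 * k' + 1) ^ n < G := by
    rw [hG]
    have : (2*k'+1)^n ≤ (2*kM+1)^n := Nat.pow_le_pow_left (by omega) n
    omega
  obtain ⟨d1, hd11, hd12, hd13⟩ := chunk_currency hrun3 hGk
  obtain ⟨d2, hd21, hd22, hd23⟩ := chunk_currency hrun5 hGk
  set L : LinSet n := Ls[istar - 1]'(by omega) with hL
  have hγ1 : ((jg+1) * m) • wordEff (bwdB c0 c1 jg) ∈ AddSubmonoid.closure L.periods := by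
    refine smul_mem_closure_of_dvd hd13 ?_
    exact Dvd.dvd.mul_left (Nat.dvd_factorial hd11 hd12) _
  have hγ2 : (jg * m) • wordEff (fwdB c0 c1 (jg+1)) ∈ AddSubmonoid.closure L.periods := by
    refine smul_mem_closure_of_dvd hd23 ?_
    exact Dvd.dvd.mul_left (Nat.dvd_factorial hd21 hd22) _
  set γ : Fin n → ℤ := ((jg+1) * m) • wordEff (bwdB c0 c1 jg)
    + (jg * m) • wordEff (fwdB c0 c1 (jg+1)) with hγ
  have hγmem : γ ∈ AddSubmonoid.closure L.periods := AddSubmonoid.add_mem _ hγ1 hγ2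
  have hγval : γ = vec2 c0 c1 (-(m:ℤ)) 0 := by
    rw [hγ, eff_bwdB hne, eff_fwdB hne, vec2_nsmul, vec2_nsmul, vec2_add]
    congr 1 <;> push_cast <;> ring
  -- build the posFold witness
  set g : Fin t → (Fin n → ℤ) := fun i =>
    wordEff (us[i.val]'(by omega)) + if i.val = istar - 1 then γ else 0 with hg
  set as : List (Fin n → ℤ) := List.ofFn g with has
  have haslen : as.length = t := by simp [has]
  have hpsum : ∀ i, i ≤ t → (as.take i).sum
      = wordEff ((us.take i).flatten) + (if istar ≤ i then γ else 0) := by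
    intro i hi
    induction i with
    | zero =>
      simp only [List.take_zero, List.sum_nil, List.take_zero]
      rw [if_neg (by omega)]
      simp [wordEff]
    | succ i ih =>
      have hi' : i < t := by omega
      have h1 : (as.take (i+1)).sum = (as.take i).sum + as[i]'(by omega) :=
        List.sum_take_succ _ _ (by omega)
      have h2 : as[i]'(by omega) = g ⟨i, hi'⟩ :=
        List.getElem_ofFn (f := g) (i := i) (by simpa using hi')
      have h3 : wordEff ((us.take (i+1)).flatten)
          = wordEff ((us.take i).flatten) + wordEff (us[i]'(by omega)) := by
        rw [flatten_take_succ us i (by omega), wordEff_append]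
      rw [h1, ih (by omega), h2, h3, hg]
      simp only
      by_cases hc : i = istar - 1
      · rw [if_pos hc, if_neg (by omega), if_pos (by omega)]
        abel
      · by_cases hc2 : istar ≤ i
        · rw [if_neg hc, if_pos hc2, if_pos (by omega)]
          abel
        · rw [if_neg hc, if_neg hc2, if_neg (by omega)]
          abel
  have hmem_as : ∀ i (ha : i < as.length) (hb : i < (Ls.map LinSet.toSet).length),
      as[i] ∈ (Ls.map LinSet.toSet)[i] := by
    intro i ha hb
    have hit : i < t := by rwa [haslen] at ha
    have h2 : as[i] = g ⟨i, hit⟩ :=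
      List.getElem_ofFn (f := g) (i := i) (by simpa using hit)
    rw [h2, List.getElem_map]
    rw [hg]
    simp only
    have hbase : wordEff (us[i]'(by omega)) ∈ (Ls[i]'(by omega)).toSet :=
      eff_mem_toSet (hmem i (by omega) (by omega))
    by_cases hc : i = istar - 1
    · subst hc
      rw [if_pos rfl]
      exact toSet_add_closure hbase hγmem
    · rw [if_neg hc, add_zero]
      exact hbase
  have hpos_as : ∀ i, 1 ≤ i → i ≤ as.length → ∀ c, 0 ≤ ((as.take i).sum) c := by
    intro i hi1 hi2 c
    rw [haslen] at hi2
    rw [hpsum i hi2]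
    have hXi : (us.take i).flatten <+: w := by rw [hweq]; exact flatten_take_prefix us _
    by_cases hc : istar ≤ i
    · rw [if_pos hc]
      have hlong : m ≤ ((us.take i).flatten).length := by
        have h1 : vlen istar ≤ vlen i := vlen_mono us hc
        show m ≤ vlen i
        omega
      have hge := pref_wW_long hne hXi hlong c
      rw [hγval, vec2_neg_m]
      simp only [Pi.add_apply, Pi.neg_apply]
      omega
    · rw [if_neg hc, add_zero]
      exact pref_wW hne hXi c
  have hfinal : as.sum = 0 := by
    have h1 : as.take t = as := List.take_of_length_le (by omega)
    have := hpsum t (le_refl t)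
    rw [h1] at this
    rw [this, if_pos histar_le]
    have h2 : us.take t = us := List.take_of_length_le (by omega)
    rw [h2, ← hweq, hwdef, eff_wW hne, hγval, vec2_add]
    simp [vec2_zero]
  have := posFold_mem (Ss := Ls.map LinSet.toSet) (as := as)
    (by rw [haslen]; simp [hLs]) (by omega) hmem_as hpos_as
  rwa [hfinal] at this

end S18
theorem stmt18 (n : ℕ) (hn : 2 ≤ n) (B : Set (Language (Sig n)))
    (hreg : ∀ L ∈ B, L.IsRegular)
    (h : ∃ ℓ : ℕ, ∀ L ∈ B, ∃ F : Set (Language (Sig n)), F.Finite ∧ F ⊆ RleFam n ℓ ∧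
      ∀ w ∈ L, ∃ K ∈ F, w ∈ K) :
    ¬ IsBasicSepSet (Dyck n) B := by
  classical
  intro hbasic
  obtain ⟨hdisj, hcover⟩ := hbasic
  obtain ⟨ℓ, hℓ⟩ := h
  have h0 : 0 < n := by omega
  have h1 : 1 < n := by omega
  set c0 : Fin n := ⟨0, h0⟩ with hc0
  set c1 : Fin n := ⟨1, h1⟩ with hc1
  have hne : c0 ≠ c1 := by
    intro hc
    have := congrArg Fin.val hc
    simp [hc0, hc1] at this
  set N : ℕ := ℓ + 2 with hN
  obtain ⟨F, hFB, hFfin, hFcov⟩ := hcover (S18.CN c0 c1 N) (S18.CN_regular c0 c1 N)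
    (fun w hw => S18.CN_disjoint hne w hw)
  have hKc : ∀ K, K ∈ F → ∃ FK : Set (Language (Sig n)), FK.Finite ∧ FK ⊆ RleFam n ℓ ∧
      ∀ w ∈ K, ∃ M ∈ FK, w ∈ M := fun K hK => hℓ K (hFB hK)
  choose FK hFK1 hFK2 hFK3 using hKc
  set 𝓜 : Set (Language (Sig n)) := ⋃ (K : {K // K ∈ F}), FK K.1 K.2 with hMdef
  have hMfin : 𝓜.Finite := by
    haveI := hFfin.to_subtype
    exact Set.finite_iUnion (fun K => hFK1 K.1 K.2)
  have hMdata : ∀ M, M ∈ 𝓜 → ∃ p : ℕ × ℕ × List (LinSet n), 1 ≤ p.1 ∧ p.1 ≤ ℓ ∧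
      p.2.2.length = p.1 ∧
      (0 : Fin n → ℤ) ∉ posFold (p.2.2.map LinSet.toSet) ∧
      M = (p.2.2.map (fun L => KApprox L p.2.1)).prod := by
    intro M hM
    have hMR : M ∈ RleFam n ℓ := by
      rw [hMdef] at hM
      rw [Set.mem_iUnion] at hM
      obtain ⟨K, hK⟩ := hM
      exact hFK2 K.1 K.2 hK
    rw [RleFam, Set.mem_iUnion] at hMR
    obtain ⟨i, hMR⟩ := hMR
    rw [Set.mem_iUnion] at hMR
    obtain ⟨hi, hMR⟩ := hMR
    rw [Set.mem_Icc] at hi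
    obtain ⟨k, Ls, hlen, hpos, heq⟩ := hMR
    exact ⟨(i, k, Ls), hi.1, hi.2, hlen, hpos, heq⟩
  set kOf : Language (Sig n) → ℕ := fun M =>
    if h : M ∈ 𝓜 then (Classical.choose (hMdata M h)).2.1 else 0 with hkOf
  obtain ⟨kM, hkM⟩ := (hMfin.image kOf).bddAbove
  set G : ℕ := (2 * kM + 1) ^ n + 1 with hG
  set m : ℕ := Nat.factorial G with hm
  set Λ : ℕ := 2 * G with hΛ
  have hG1 : 1 ≤ G := by omega
  have hm1 : 1 ≤ m := Nat.one_le_iff_ne_zero.2 (Nat.factorial_ne_zero G)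
  have hΛ1 : 1 ≤ Λ := by omega
  set w : List (Sig n) := S18.wW c0 c1 Λ N m with hw
  have hwC : w ∈ S18.CN c0 c1 N := S18.wW_mem_CN hne hm1 hΛ1
  obtain ⟨K, hKF, hwK⟩ := hFcov w hwC
  obtain ⟨M, hMK, hwM⟩ := hFK3 K hKF w hwK
  have hM𝓜 : M ∈ 𝓜 := by
    rw [hMdef, Set.mem_iUnion]
    exact ⟨⟨K, hKF⟩, hMK⟩
  obtain ⟨ht1, ht2, hlen, hpos, heq⟩ := Classical.choose_spec (hMdata M hM𝓜)
  set p := Classical.choose (hMdata M hM𝓜) with hp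
  have hkle : p.2.1 ≤ kM := by
    have hin : kOf M ∈ kOf '' 𝓜 := Set.mem_image_of_mem kOf hM𝓜
    have := hkM hin
    rw [hkOf] at this
    simp only [dif_pos hM𝓜] at this
    exact this
  rw [heq] at hwM
  have hcontra := S18.main_contra hne (ℓ := ℓ) (t := p.1) (k' := p.2.1) (kM := kM)
    hkle ht1 ht2 hlen hwM
  exact hpos hcontra
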